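/- Let λ be a partition of n and μ a composition of n, and fix i ∈ ℕ with μ_i > μ_{i+1}. Define the composition ν by ν_i = μ_i - 1, ν_{i+1} = μ_{i+1} + 1, and ν_j = μ_j for all j ≠ i, i+1. Then the Kostka number K_{λμ} ≤ K_{λν}, i.e., the number of semistandard λ-tableaux of content μ is at most the number of semistandard λ-tableaux of content ν. -/

import Mathlib

/-- A composition of `n`: a finitely-supported sequence of naturals summing to `n`. -/
def IsComposition (n : ℕ) (μ : ℕ → ℕ) : Prop :=
  (Function.support μ).Finite ∧ ∑ᶠ i, μ i = n

/-- A partition of `n`: a weakly decreasing composition of `n`. -/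
def IsPartition (n : ℕ) (μ : ℕ → ℕ) : Prop :=
  Antitone μ ∧ IsComposition n μ

/-- `μ` dominates `ν`: every partial sum of `μ` is at least that of `ν`. -/
def Dominates (μ ν : ℕ → ℕ) : Prop :=
  ∀ r, ∑ i ∈ Finset.range r, ν i ≤ ∑ i ∈ Finset.range r, μ i

/-- `T` is a semistandard tableau of shape `p` (0-indexed rows/columns/entries):
rows weakly increase, columns strictly increase, and `T` is zero outside the diagram. -/
def IsSSYT (p : ℕ → ℕ) (T : ℕ → ℕ → ℕ) : Prop :=
  (∀ r c₁ c₂, c₁ ≤ c₂ → c₂ < p r → T r c₁ ≤ T r c₂) ∧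
  (∀ r₁ r₂ c, r₁ < r₂ → c < p r₂ → T r₁ c < T r₂ c) ∧
  (∀ r c, p r ≤ c → T r c = 0)

/-- The number of entries of `T` equal to `i` within the diagram of `p`. -/
noncomputable def contentOf (p : ℕ → ℕ) (T : ℕ → ℕ → ℕ) (i : ℕ) : ℕ :=
  {q : ℕ × ℕ | q.2 < p q.1 ∧ T q.1 q.2 = i}.ncard

/-- The Kostka number: the number of semistandard tableaux of shape `p` and content `μ`. -/
noncomputable def Kostka (p μ : ℕ → ℕ) : ℕ :=
  {T : ℕ → ℕ → ℕ | IsSSYT p T ∧ ∀ i, contentOf p T i = μ i}.ncard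

namespace KN

/-- decode a word position into a cell (rows read bottom-to-top). -/
def dec (m M k : ℕ) : ℕ × ℕ := (m - 1 - k / M, k % M)

/-- encode a cell into a word position. -/
def enc (m M : ℕ) (q : ℕ × ℕ) : ℕ := q.2 + (m - 1 - q.1) * M

/-- bracket weight of a value, for letters `i`, `i+1`. -/
def wt (i v : ℕ) : ℤ := if v = i + 1 then 1 else if v = i then -1 else 0

/-- the word of a tableau. -/
def w (i m M : ℕ) (lam : ℕ → ℕ) (U : ℕ → ℕ → ℕ) (k : ℕ) : ℤ :=
  if k < m * M ∧ (dec m M k).2 < lam (dec m M k).1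
  then wt i (U (dec m M k).1 (dec m M k).2) else 0

/-- height function: partial sums of the word. -/
def s (i m M : ℕ) (lam : ℕ → ℕ) (U : ℕ → ℕ → ℕ) (k : ℕ) : ℤ :=
  ∑ j ∈ Finset.range k, w i m M lam U j

/-- flip the cell at word position `K` to the value `i+1`. -/
def flip (i m M : ℕ) (T : ℕ → ℕ → ℕ) (K : ℕ) : ℕ → ℕ → ℕ :=
  fun r c => if r = (dec m M K).1 ∧ c = (dec m M K).2 then i + 1 else T r c

/-- `j` is an unmatched opening bracket of the word of `U`. -/
def cond (i m M : ℕ) (lam : ℕ → ℕ) (U : ℕ → ℕ → ℕ) (j : ℕ) : Prop :=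
  w i m M lam U j = 1 ∧
    ∀ t, j + 1 ≤ t → t ≤ m * M → s i m M lam U (j + 1) ≤ s i m M lam U t

lemma dec_enc {m M : ℕ} {q : ℕ × ℕ} (hr : q.1 < m) (hc : q.2 < M) :
    dec m M (enc m M q) = q := by
  obtain ⟨r, c⟩ := q
  simp only [dec, enc]
  have hM0 : 0 < M := by omega
  have h1 : (c + (m - 1 - r) * M) / M = m - 1 - r := by
    rw [Nat.add_mul_div_right _ _ hM0, Nat.div_eq_of_lt hc]; omega
  have h2 : (c + (m - 1 - r) * M) % M = c := by
    rw [Nat.add_mul_mod_self_right, Nat.mod_eq_of_lt hc]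
  simp only at hr hc
  rw [h1, h2]
  have : m - 1 - (m - 1 - r) = r := by omega
  rw [this]

lemma enc_lt {m M : ℕ} {q : ℕ × ℕ} (hr : q.1 < m) (hc : q.2 < M) :
    enc m M q < m * M := by
  obtain ⟨r, c⟩ := q
  simp only [enc]
  simp only at hr hc
  have : m - 1 - r ≤ m - 1 := by omega
  calc c + (m - 1 - r) * M < M + (m - 1 - r) * M := by omega
    _ = (m - 1 - r + 1) * M := by ring
    _ ≤ m * M := Nat.mul_le_mul_right _ (by omega)

lemma dec_spec {m M k : ℕ} (hk : k < m * M) :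
    (dec m M k).1 < m ∧ (dec m M k).2 < M ∧ enc m M (dec m M k) = k := by
  have hM0 : 0 < M := by by_contra h; push_neg at h; interval_cases M <;> omega
  have hm0 : 0 < m := by by_contra h; push_neg at h; interval_cases m <;> omega
  have hdiv : k / M < m := Nat.div_lt_iff_lt_mul hM0 |>.mpr (by omega)
  have h1 : (dec m M k).1 < m := by simp only [dec]; generalize k / M = d at *; omega
  refine ⟨h1, Nat.mod_lt _ hM0, ?_⟩
  simp only [dec, enc]
  have h2 : m - 1 - (m - 1 - k / M) = k / M := by generalize k / M = d at *; omega
  rw [h2, Nat.mul_comm, Nat.mod_add_div]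

section
variable {i m M : ℕ} {lam : ℕ → ℕ}

lemma setQ_eq (hm : ∀ r, m ≤ r → lam r = 0) (hM : ∀ r, lam r < M)
    (Q : ℕ × ℕ → Prop) [DecidablePred Q] :
    {q : ℕ × ℕ | q.2 < lam q.1 ∧ Q q} =
      ↑(((Finset.range (m * M)).filter
        (fun k => (dec m M k).2 < lam (dec m M k).1 ∧ Q (dec m M k))).image (dec m M)) := by
  ext q
  simp only [Finset.coe_image, Set.mem_image, Finset.mem_coe, Finset.mem_filter,
    Finset.mem_range, Set.mem_setOf_eq]
  constructor
  · rintro ⟨hd, hQ⟩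
    have hr : q.1 < m := by
      by_contra h; push_neg at h; rw [hm _ h] at hd; omega
    have hc : q.2 < M := lt_trans hd (hM _)
    exact ⟨enc m M q, ⟨enc_lt hr hc, by rw [dec_enc hr hc]; exact ⟨hd, hQ⟩⟩, dec_enc hr hc⟩
  · rintro ⟨k, ⟨hk, hd, hQ⟩, rfl⟩
    exact ⟨hd, hQ⟩

lemma setQ_finite (hm : ∀ r, m ≤ r → lam r = 0) (hM : ∀ r, lam r < M)
    (Q : ℕ × ℕ → Prop) : {q : ℕ × ℕ | q.2 < lam q.1 ∧ Q q}.Finite := by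
  classical
  rw [setQ_eq hm hM Q]
  exact Finset.finite_toSet _

lemma setQ_card (hm : ∀ r, m ≤ r → lam r = 0) (hM : ∀ r, lam r < M)
    (Q : ℕ × ℕ → Prop) [DecidablePred Q] :
    {q : ℕ × ℕ | q.2 < lam q.1 ∧ Q q}.ncard =
      (((Finset.range (m * M)).filter
        (fun k => (dec m M k).2 < lam (dec m M k).1 ∧ Q (dec m M k)))).card := by
  rw [setQ_eq hm hM Q, Set.ncard_coe_finset]
  apply Finset.card_image_of_injOn
  intro k1 h1 k2 h2 he
  simp only [Finset.mem_coe, Finset.mem_filter, Finset.mem_range] at h1 h2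
  rw [← (dec_spec h1.1).2.2, ← (dec_spec h2.1).2.2, he]

lemma content_card (hm : ∀ r, m ≤ r → lam r = 0) (hM : ∀ r, lam r < M)
    (U : ℕ → ℕ → ℕ) (v : ℕ) :
    contentOf lam U v = (((Finset.range (m * M)).filter
      (fun k => (dec m M k).2 < lam (dec m M k).1 ∧ U (dec m M k).1 (dec m M k).2 = v))).card := by
  classical
  exact setQ_card hm hM (fun q => U q.1 q.2 = v)

lemma s_top (hm : ∀ r, m ≤ r → lam r = 0) (hM : ∀ r, lam r < M) (U : ℕ → ℕ → ℕ) :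
    s i m M lam U (m * M) = (contentOf lam U (i + 1) : ℤ) - (contentOf lam U i : ℤ) := by
  rw [content_card hm hM U (i+1), content_card hm hM U i]
  unfold s
  have hpt : ∀ k ∈ Finset.range (m * M), w i m M lam U k =
      (if (dec m M k).2 < lam (dec m M k).1 ∧ U (dec m M k).1 (dec m M k).2 = i + 1 then (1:ℤ) else 0)
      - (if (dec m M k).2 < lam (dec m M k).1 ∧ U (dec m M k).1 (dec m M k).2 = i then (1:ℤ) else 0) := by
    intro k hk
    rw [Finset.mem_range] at hk
    unfold w wt
    by_cases hd : (dec m M k).2 < lam (dec m M k).1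
    · by_cases h1 : U (dec m M k).1 (dec m M k).2 = i + 1
      · rw [if_pos ⟨hk, hd⟩, if_pos h1, if_pos ⟨hd, h1⟩, if_neg (by simp [h1])]; ring
      · by_cases h2 : U (dec m M k).1 (dec m M k).2 = i
        · rw [if_pos ⟨hk, hd⟩, if_neg h1, if_pos h2, if_neg (by simp [h1]), if_pos ⟨hd, h2⟩]; ring
        · rw [if_pos ⟨hk, hd⟩, if_neg h1, if_neg h2, if_neg (by simp [h1]), if_neg (by simp [h2])]; ring
    · rw [if_neg (by tauto), if_neg (by tauto), if_neg (by tauto)]; ring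
  rw [Finset.sum_congr rfl hpt, Finset.sum_sub_distrib]
  simp [Finset.sum_boole]

lemma w_bounds (U : ℕ → ℕ → ℕ) (k : ℕ) :
    -1 ≤ w i m M lam U k ∧ w i m M lam U k ≤ 1 := by
  unfold w wt; split_ifs <;> omega

lemma s_succ (U : ℕ → ℕ → ℕ) (k : ℕ) :
    s i m M lam U (k + 1) = s i m M lam U k + w i m M lam U k :=
  Finset.sum_range_succ _ _

lemma main_step (hm : ∀ r, m ≤ r → lam r = 0) (hM : ∀ r, lam r < M)
    (hanti : Antitone lam) (μ : ℕ → ℕ) (hi : μ (i + 1) < μ i)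
    (T : ℕ → ℕ → ℕ) (hT : IsSSYT lam T) (hcont : ∀ v, contentOf lam T v = μ v) :
    ∃ K, (dec m M K).2 < lam (dec m M K).1 ∧ T (dec m M K).1 (dec m M K).2 = i ∧
      IsSSYT lam (flip i m M T K) ∧
      contentOf lam (flip i m M T K) i = μ i - 1 ∧
      contentOf lam (flip i m M T K) (i + 1) = μ (i + 1) + 1 ∧
      (∀ v, v ≠ i → v ≠ i + 1 → contentOf lam (flip i m M T K) v = μ v) ∧
      IsLeast {j | cond i m M lam (flip i m M T K) j} K := by
  classical
  set N := m * M with hN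
  -- the height at the end of the word is negative
  have hsN : s i m M lam T N = (μ (i + 1) : ℤ) - (μ i : ℤ) := by
    rw [s_top hm hM, hcont, hcont]
  have hsN_neg : s i m M lam T N < 0 := by
    rw [hsN]; push_cast; omega
  -- the minimum of the height function
  have hne : (Finset.range (N + 1)).Nonempty := ⟨0, by simp⟩
  set M0 : ℤ := ((Finset.range (N + 1)).image (s i m M lam T)).min' (hne.image _) with hM0
  have hM0le : ∀ t, t ≤ N → M0 ≤ s i m M lam T t := by
    intro t ht
    apply Finset.min'_le
    exact Finset.mem_image_of_mem _ (Finset.mem_range.mpr (by omega))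
  have hM0neg : M0 < 0 := lt_of_le_of_lt (hM0le N le_rfl) hsN_neg
  have hs0 : s i m M lam T 0 = 0 := by simp [s]
  have hattain : ∃ t, t ≤ N ∧ s i m M lam T t = M0 := by
    have := Finset.min'_mem ((Finset.range (N + 1)).image (s i m M lam T)) (hne.image _)
    rw [Finset.mem_image] at this
    obtain ⟨t, ht, hst⟩ := this
    rw [Finset.mem_range] at ht
    exact ⟨t, by omega, hst⟩
  -- K+1 : first time the height hits its minimum M0
  have hex : ∃ j, s i m M lam T (j + 1) = M0 := by
    obtain ⟨t, htN, hst⟩ := hattain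
    have ht0 : t ≠ 0 := by
      intro h; rw [h, hs0] at hst; omega
    exact ⟨t - 1, by rw [show t - 1 + 1 = t by omega]; exact hst⟩
  set K := Nat.find hex with hKdef
  have hsK1 : s i m M lam T (K + 1) = M0 := Nat.find_spec hex
  have hKN : K < N := by
    obtain ⟨t, htN, hst⟩ := hattain
    have ht0 : t ≠ 0 := by intro h; rw [h, hs0] at hst; omega
    have : K ≤ t - 1 := Nat.find_min' hex (by rw [show t - 1 + 1 = t by omega]; exact hst)
    -- need N ≥ 1: t ≥ 1 and t ≤ N
    omega
  have hslt : ∀ t, t ≤ K → M0 + 1 ≤ s i m M lam T t := by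
    intro t ht
    rcases Nat.eq_zero_or_pos t with h0 | hpos
    · rw [h0, hs0]; omega
    · obtain ⟨j, rfl⟩ : ∃ j, t = j + 1 := ⟨t - 1, by omega⟩
      have h1 : M0 ≤ s i m M lam T (j + 1) := hM0le _ (by omega)
      have h2 : s i m M lam T (j + 1) ≠ M0 :=
        Nat.find_min hex (show j < Nat.find hex by rw [← hKdef]; omega)
      omega
  have hwK : w i m M lam T K = -1 ∧ s i m M lam T K = M0 + 1 := by
    have h1 := s_succ (i := i) (m := m) (M := M) (lam := lam) T K
    have h2 := hslt K le_rfl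
    have h3 := (w_bounds (i := i) (m := m) (M := M) (lam := lam) T K).1
    constructor <;> omega
  -- decode the flipped position
  obtain ⟨hrm, hcM, henc⟩ := dec_spec (show K < m * M from hKN)
  set r := (dec m M K).1 with hr
  set c := (dec m M K).2 with hc
  have hdi : c < lam r ∧ T r c = i := by
    have := hwK.1
    unfold w wt at this
    by_cases hg : K < m * M ∧ (dec m M K).2 < lam (dec m M K).1
    · rw [if_pos hg] at this
      refine ⟨hg.2, ?_⟩
      by_cases h1 : T r c = i + 1
      · rw [if_pos h1] at this; omega
      · by_cases h2 : T r c = i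
        · exact h2
        · rw [if_neg h1, if_neg h2] at this; omega
    · rw [if_neg hg] at this; omega
  have hrc : ((r, c) : ℕ × ℕ) = dec m M K := Prod.mk.eta
  have hencK : enc m M (r, c) = K := by rw [hrc]; exact henc
  have hrm' : r < m := hrm
  have hcM' : c < M := hcM
  -- H1 : there is no `i` strictly to the right of the flipped cell in its row
  have H1 : ∀ c₂, c < c₂ → c₂ < lam r → i + 1 ≤ T r c₂ := by
    intro c₂ hc2 hc2d
    have hge : T r c ≤ T r c₂ := hT.1 r c c₂ (le_of_lt hc2) hc2d
    by_contra hcon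
    push_neg at hcon
    have hTrc := hdi.2
    have heq : T r c₂ = i := by omega
    have heq1 : T r (c + 1) = i := by
      have l1 := hT.1 r c (c + 1) (by omega) (by omega)
      have l2 := hT.1 r (c + 1) c₂ (by omega) hc2d
      omega
    have hc1M : c + 1 < M := by have := hM r; omega
    have hencc1 : enc m M (r, c + 1) = K + 1 := by
      simp only [enc] at hencK ⊢
      omega
    have hdec1 : dec m M (K + 1) = (r, c + 1) := by
      rw [← hencc1]; exact dec_enc (q := (r, c + 1)) hrm' hc1M
    have hK1N : K + 1 < m * M := by
      rw [← hencc1]; exact enc_lt (q := (r, c + 1)) hrm' hc1M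
    have hw1 : w i m M lam T (K + 1) = -1 := by
      unfold w wt
      rw [hdec1]
      dsimp only
      rw [if_pos ⟨hK1N, show c + 1 < lam r by omega⟩,
        if_neg (show ¬ T r (c + 1) = i + 1 by omega), if_pos heq1]
    have hs2 : s i m M lam T (K + 1 + 1) = M0 - 1 := by
      have := s_succ (i := i) (m := m) (M := M) (lam := lam) T (K + 1)
      omega
    have hfin := hM0le (K + 1 + 1) (by omega)
    omega
  -- H2 : the cell below the flipped cell is not `i+1`
  have H2 : c < lam (r + 1) → i + 2 ≤ T (r + 1) c := by
    intro hcd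
    have hTrc := hdi.2
    have hgt : T r c < T (r + 1) c := hT.2.1 r (r + 1) c (by omega) hcd
    by_contra hcon
    push_neg at hcon
    have heq : T (r + 1) c = i + 1 := by omega
    have hex0 : ∃ c', T (r + 1) c' = i + 1 := ⟨c, heq⟩
    set c₀ := Nat.find hex0 with hc₀def
    have hc₀ : T (r + 1) c₀ = i + 1 := Nat.find_spec hex0
    have hc₀le : c₀ ≤ c := Nat.find_min' hex0 heq
    have hmid : ∀ c', c₀ ≤ c' → c' ≤ c → T (r + 1) c' = i + 1 := by
      intro c' h1 h2
      have l1 := hT.1 (r + 1) c₀ c' h1 (by omega)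
      have l2 := hT.1 (r + 1) c' c h2 hcd
      omega
    have hr1m : r + 1 < m := by
      by_contra hcon2
      push_neg at hcon2
      have := hm (r + 1) hcon2
      omega
    have hno : ∀ t, t < c₀ → T r t ≠ i := by
      intro t ht hti
      have h1 : T r t < T (r + 1) t := hT.2.1 r (r + 1) t (by omega) (by omega)
      have h2 : T (r + 1) t ≤ T (r + 1) c := hT.1 (r + 1) t c (by omega) hcd
      have h3 : T (r + 1) t = i + 1 := by omega
      have := Nat.find_min' hex0 h3
      omega
    set a := m - 1 - (r + 1) with hadef
    have har : m - 1 - r = a + 1 := by omega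
    have hmul : (a + 1) * M = a * M + M := by ring
    have hKeq : K = c + (a * M + M) := by
      simp only [enc, har] at hencK
      omega
    -- value of the word along row r+1 (positions c₀ + a*M + t) and row r (positions M + a*M + t)
    have hwval1 : ∀ t, t < M - c₀ → w i m M lam T (c₀ + a * M + t) =
        (if c₀ + t < lam (r + 1) then wt i (T (r + 1) (c₀ + t)) else 0) := by
      intro t ht
      have hcol : c₀ + t < M := by omega
      have hencx : enc m M (r + 1, c₀ + t) = c₀ + a * M + t := by
        simp only [enc, ← hadef]; omega
      have hdect : dec m M (c₀ + a * M + t) = (r + 1, c₀ + t) := by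
        rw [← hencx]; exact dec_enc (q := (r + 1, c₀ + t)) hr1m hcol
      have hltN : c₀ + a * M + t < m * M := by
        have := enc_lt (q := (r + 1, c₀ + t)) hr1m hcol
        simp only [enc] at this; omega
      unfold w
      rw [hdect]
      dsimp only
      by_cases hdg : c₀ + t < lam (r + 1)
      · rw [if_pos ⟨hltN, hdg⟩, if_pos hdg]
      · rw [if_neg (by tauto), if_neg hdg]
    have hwval2 : ∀ t, t < c + 1 → w i m M lam T (M + a * M + t) =
        (if t < lam r then wt i (T r t) else 0) := by
      intro t ht
      have hcol : t < M := by omega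
      have hencx : enc m M (r, t) = M + a * M + t := by
        simp only [enc, har]; omega
      have hdect : dec m M (M + a * M + t) = (r, t) := by
        rw [← hencx]; exact dec_enc (q := (r, t)) hrm' hcol
      have hltN : M + a * M + t < m * M := by
        have := enc_lt (q := (r, t)) hrm' hcol
        simp only [enc, har] at this; omega
      unfold w
      rw [hdect]
      dsimp only
      by_cases hdg : t < lam r
      · rw [if_pos ⟨hltN, hdg⟩, if_pos hdg]
      · rw [if_neg (by tauto), if_neg hdg]
    -- part 1 : the sum over row r+1, columns ≥ c₀, is at least c + 1 - c₀
    have hpart1 : ((c : ℤ) + 1 - (c₀ : ℤ)) ≤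
        ∑ j ∈ Finset.Ico (c₀ + a * M) (M + a * M), w i m M lam T j := by
      rw [Finset.sum_Ico_eq_sum_range]
      have hlen : M + a * M - (c₀ + a * M) = M - c₀ := by omega
      rw [hlen, Finset.range_eq_Ico,
        ← Finset.sum_Ico_consecutive _ (Nat.zero_le (c + 1 - c₀)) (show c + 1 - c₀ ≤ M - c₀ by omega)]
      have e1 : ∑ t ∈ Finset.Ico 0 (c + 1 - c₀), w i m M lam T (c₀ + a * M + t) =
          ((c + 1 - c₀ : ℕ) : ℤ) := by
        have hterm : ∀ t ∈ Finset.Ico 0 (c + 1 - c₀), w i m M lam T (c₀ + a * M + t) = 1 := by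
          intro t ht
          rw [Finset.mem_Ico] at ht
          rw [hwval1 t (by omega)]
          have hval : T (r + 1) (c₀ + t) = i + 1 := hmid _ (by omega) (by omega)
          rw [if_pos (by omega), hval]
          unfold wt
          simp
        rw [Finset.sum_congr rfl hterm, Finset.sum_const, Nat.card_Ico]
        simp
      have e2 : 0 ≤ ∑ t ∈ Finset.Ico (c + 1 - c₀) (M - c₀), w i m M lam T (c₀ + a * M + t) := by
        apply Finset.sum_nonneg
        intro t ht
        rw [Finset.mem_Ico] at ht
        rw [hwval1 t (by omega)]
        by_cases hdg : c₀ + t < lam (r + 1)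
        · rw [if_pos hdg]
          have hvge : T (r + 1) c ≤ T (r + 1) (c₀ + t) := hT.1 (r + 1) c (c₀ + t) (by omega) hdg
          unfold wt
          split_ifs <;> omega
        · rw [if_neg hdg]
      rw [e1]
      push_cast
      omega
    -- part 2 : the sum over row r, columns ≤ c, is at least -(c + 1 - c₀)
    have hpart2 : -((c : ℤ) + 1 - (c₀ : ℤ)) ≤
        ∑ j ∈ Finset.Ico (M + a * M) (K + 1), w i m M lam T j := by
      rw [Finset.sum_Ico_eq_sum_range]
      have hlen : K + 1 - (M + a * M) = c + 1 := by omega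
      rw [hlen, Finset.range_eq_Ico,
        ← Finset.sum_Ico_consecutive _ (Nat.zero_le c₀) (show c₀ ≤ c + 1 by omega)]
      have e1 : 0 ≤ ∑ t ∈ Finset.Ico 0 c₀, w i m M lam T (M + a * M + t) := by
        apply Finset.sum_nonneg
        intro t ht
        rw [Finset.mem_Ico] at ht
        rw [hwval2 t (by omega)]
        by_cases hdg : t < lam r
        · rw [if_pos hdg]
          have := hno t (by omega)
          unfold wt
          split_ifs <;> omega
        · rw [if_neg hdg]
      have e2 : -((c : ℤ) + 1 - (c₀ : ℤ)) ≤
          ∑ t ∈ Finset.Ico c₀ (c + 1), w i m M lam T (M + a * M + t) := by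
        calc -((c : ℤ) + 1 - (c₀ : ℤ)) = ∑ t ∈ Finset.Ico c₀ (c + 1), (-1 : ℤ) := by
              rw [Finset.sum_const, Nat.card_Ico, nsmul_eq_mul]
              have hcast : ((c + 1 - c₀ : ℕ) : ℤ) = (c : ℤ) + 1 - (c₀ : ℤ) := by omega
              rw [hcast]
              ring
          _ ≤ _ := by
              apply Finset.sum_le_sum
              intro t ht
              rw [Finset.mem_Ico] at ht
              rw [hwval2 t (by omega)]
              unfold wt
              split_ifs <;> omega
      omega
    -- combine
    have hsub : ∑ j ∈ Finset.Ico (c₀ + a * M) (K + 1), w i m M lam T j =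
        s i m M lam T (K + 1) - s i m M lam T (c₀ + a * M) :=
      Finset.sum_Ico_eq_sub _ (by omega)
    have hsplit : ∑ j ∈ Finset.Ico (c₀ + a * M) (K + 1), w i m M lam T j =
        (∑ j ∈ Finset.Ico (c₀ + a * M) (M + a * M), w i m M lam T j) +
          ∑ j ∈ Finset.Ico (M + a * M) (K + 1), w i m M lam T j :=
      (Finset.sum_Ico_consecutive _ (by omega) (by omega)).symm
    have hlow := hslt (c₀ + a * M) (by omega)
    omega
  -- basic facts about the flipped tableau
  have hFdef : ∀ r' c', flip i m M T K r' c' = if r' = r ∧ c' = c then i + 1 else T r' c' := by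
    intro r' c'; rfl
  have hFrc : flip i m M T K r c = i + 1 := by
    rw [hFdef]; simp
  have hFne : ∀ r' c', ¬(r' = r ∧ c' = c) → flip i m M T K r' c' = T r' c' := by
    intro r' c' h; rw [hFdef, if_neg h]
  have hTrc : T r c = i := hdi.2
  -- the flipped tableau is semistandard
  have hSSYT : IsSSYT lam (flip i m M T K) := by
    refine ⟨?_, ?_, ?_⟩
    · intro r' c₁ c₂ hle hlt
      rw [hFdef, hFdef]
      by_cases h1 : r' = r ∧ c₁ = c
      · rw [if_pos h1]
        by_cases h2 : r' = r ∧ c₂ = c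
        · rw [if_pos h2]
        · rw [if_neg h2]
          obtain ⟨rfl, rfl⟩ := h1
          have hc2 : c < c₂ := by
            rcases Nat.lt_or_ge c c₂ with h | h
            · exact h
            · exact absurd ⟨rfl, by omega⟩ h2
          exact H1 c₂ hc2 hlt
      · rw [if_neg h1]
        by_cases h2 : r' = r ∧ c₂ = c
        · rw [if_pos h2]
          have : T r' c₁ ≤ T r' c₂ := hT.1 r' c₁ c₂ hle hlt
          have : T r' c₂ = i := by rw [h2.1, h2.2]; exact hTrc
          omega
        · rw [if_neg h2]; exact hT.1 r' c₁ c₂ hle hlt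
    · intro r₁ r₂ c' hlt hcd2
      rw [hFdef, hFdef]
      by_cases h1 : r₁ = r ∧ c' = c
      · rw [if_pos h1]
        have h2 : ¬(r₂ = r ∧ c' = c) := by
          rintro ⟨rfl, -⟩; omega
        rw [if_neg h2]
        obtain ⟨rfl, rfl⟩ := h1
        have hr12 : r + 1 ≤ r₂ := by omega
        have hlam1 : c < lam (r + 1) := lt_of_lt_of_le hcd2 (hanti hr12)
        have hbelow : i + 2 ≤ T (r + 1) c := H2 hlam1
        rcases Nat.eq_or_lt_of_le hr12 with he | hlt2
        · rw [← he]; omega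
        · have := hT.2.1 (r + 1) r₂ c hlt2 hcd2; omega
      · rw [if_neg h1]
        by_cases h2 : r₂ = r ∧ c' = c
        · rw [if_pos h2]
          have l1 := hT.2.1 r₁ r₂ c' hlt hcd2
          have l2 : T r₂ c' = i := by rw [h2.1, h2.2]; exact hTrc
          omega
        · rw [if_neg h2]; exact hT.2.1 r₁ r₂ c' hlt hcd2
    · intro r' c' hge
      rw [hFdef, if_neg ?_]
      · exact hT.2.2 r' c' hge
      · rintro ⟨rfl, rfl⟩
        have := hdi.1
        omega
  -- contents of the flipped tableau
  have hfinset : ∀ v, {q : ℕ × ℕ | q.2 < lam q.1 ∧ T q.1 q.2 = v}.Finite :=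
    fun v => setQ_finite hm hM _
  have hmemrc : ((r, c) : ℕ × ℕ) ∈ {q : ℕ × ℕ | q.2 < lam q.1 ∧ T q.1 q.2 = i} := by
    exact ⟨hdi.1, hTrc⟩
  have hcont_i : contentOf lam (flip i m M T K) i = μ i - 1 := by
    have hset : {q : ℕ × ℕ | q.2 < lam q.1 ∧ flip i m M T K q.1 q.2 = i} =
        {q : ℕ × ℕ | q.2 < lam q.1 ∧ T q.1 q.2 = i} \ {((r, c) : ℕ × ℕ)} := by
      ext ⟨r', c'⟩
      simp only [Set.mem_setOf_eq, Set.mem_diff, Set.mem_singleton_iff, Prod.mk.injEq]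
      rw [hFdef]
      by_cases h1 : r' = r ∧ c' = c
      · obtain ⟨rfl, rfl⟩ := h1
        simp
      · rw [if_neg h1]
        constructor
        · rintro ⟨hd, hv⟩; exact ⟨⟨hd, hv⟩, fun h => h1 h⟩
        · rintro ⟨⟨hd, hv⟩, -⟩; exact ⟨hd, hv⟩
    unfold contentOf
    rw [hset, Set.ncard_diff_singleton_of_mem hmemrc]
    rw [← hcont i]
    rfl
  have hcont_i1 : contentOf lam (flip i m M T K) (i + 1) = μ (i + 1) + 1 := by
    have hset : {q : ℕ × ℕ | q.2 < lam q.1 ∧ flip i m M T K q.1 q.2 = i + 1} =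
        insert ((r, c) : ℕ × ℕ) {q : ℕ × ℕ | q.2 < lam q.1 ∧ T q.1 q.2 = i + 1} := by
      ext ⟨r', c'⟩
      simp only [Set.mem_setOf_eq, Set.mem_insert_iff, Prod.mk.injEq]
      rw [hFdef]
      by_cases h1 : r' = r ∧ c' = c
      · obtain ⟨rfl, rfl⟩ := h1
        simp [hdi.1]
      · rw [if_neg h1]
        constructor
        · rintro ⟨hd, hv⟩; exact Or.inr ⟨hd, hv⟩
        · rintro (h | ⟨hd, hv⟩)
          · exact absurd ⟨h.1, h.2⟩ h1
          · exact ⟨hd, hv⟩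
    have hnot : ((r, c) : ℕ × ℕ) ∉ {q : ℕ × ℕ | q.2 < lam q.1 ∧ T q.1 q.2 = i + 1} := by
      intro h
      have : T r c = i + 1 := h.2
      omega
    unfold contentOf
    rw [hset, Set.ncard_insert_of_notMem hnot (hfinset (i + 1))]
    rw [← hcont (i + 1)]
    rfl
  have hcont_other : ∀ v, v ≠ i → v ≠ i + 1 → contentOf lam (flip i m M T K) v = μ v := by
    intro v hv1 hv2
    have hset : {q : ℕ × ℕ | q.2 < lam q.1 ∧ flip i m M T K q.1 q.2 = v} =
        {q : ℕ × ℕ | q.2 < lam q.1 ∧ T q.1 q.2 = v} := by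
      ext ⟨r', c'⟩
      simp only [Set.mem_setOf_eq]
      rw [hFdef]
      by_cases h1 : r' = r ∧ c' = c
      · obtain ⟨rfl, rfl⟩ := h1
        rw [if_pos ⟨rfl, rfl⟩]
        constructor
        · rintro ⟨hd, hv⟩; omega
        · rintro ⟨hd, hv⟩; rw [hTrc] at hv; omega
      · rw [if_neg h1]
    unfold contentOf
    rw [hset, ← hcont v]
    rfl
  -- the word and heights of the flipped tableau
  have hwF : ∀ j, j ≠ K → w i m M lam (flip i m M T K) j = w i m M lam T j := by
    intro j hj
    unfold w
    by_cases hg : j < m * M ∧ (dec m M j).2 < lam (dec m M j).1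
    · rw [if_pos hg, if_pos hg]
      congr 1
      apply hFne
      rintro ⟨h1, h2⟩
      apply hj
      have e1 := (dec_spec hg.1).2.2
      have e2 : dec m M j = (r, c) := Prod.ext h1 h2
      rw [e2, hencK] at e1
      exact e1.symm
    · rw [if_neg hg, if_neg hg]
  have hwFK : w i m M lam (flip i m M T K) K = 1 := by
    unfold w
    rw [if_pos ⟨show K < m * M from hKN, hdi.1⟩]
    have : flip i m M T K (dec m M K).1 (dec m M K).2 = i + 1 := hFrc
    rw [this]
    unfold wt
    simp
  have hsF : ∀ t, s i m M lam (flip i m M T K) t =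
      s i m M lam T t + (if K < t then 2 else 0) := by
    intro t
    unfold s
    have hterm : ∀ j ∈ Finset.range t, w i m M lam (flip i m M T K) j =
        w i m M lam T j + (if j = K then 2 else 0) := by
      intro j hj
      by_cases hjK : j = K
      · subst hjK
        rw [if_pos rfl, hwFK, hwK.1]
        ring
      · rw [hwF j hjK, if_neg hjK]
        ring
    rw [Finset.sum_congr rfl hterm, Finset.sum_add_distrib,
      Finset.sum_ite_eq' (Finset.range t) K (fun _ => (2 : ℤ))]
    simp [Finset.mem_range]
  -- K is the least unmatched opening bracket of the flipped word
  have hLeast : IsLeast {j | cond i m M lam (flip i m M T K) j} K := by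
    constructor
    · refine ⟨hwFK, ?_⟩
      intro t h1t h2t
      rw [hsF, hsF]
      rw [if_pos (by omega), if_pos (by omega)]
      have h3 := hM0le t h2t
      omega
    · intro j hj
      by_contra hcon
      push_neg at hcon
      obtain ⟨hw1, hall⟩ := hj
      rw [hwF j (by omega)] at hw1
      have h1 : s i m M lam T (j + 1) = s i m M lam T j + 1 := by
        rw [s_succ, hw1]
      have h2 := hslt j (by omega)
      have h3 := hall K (by omega) (by omega)
      rw [hsF, hsF] at h3
      rw [if_neg (by omega), if_neg (by omega)] at h3
      have h4 := hwK.2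
      omega
  exact ⟨K, hdi.1, hdi.2, hSSYT, hcont_i, hcont_i1, hcont_other, hLeast⟩
end
end KN

theorem kostka_note_stmt3 {n : ℕ} (lam μ ν : ℕ → ℕ)
    (hlam : IsPartition n lam) (hμ : IsComposition n μ)
    (i : ℕ) (hi : μ (i + 1) < μ i)
    (hν₁ : ν i = μ i - 1) (hν₂ : ν (i + 1) = μ (i + 1) + 1)
    (hν₃ : ∀ j, j ≠ i → j ≠ i + 1 → ν j = μ j) :
    Kostka lam μ ≤ Kostka lam ν := by
  classical
  obtain ⟨hanti, hsupp, hsum⟩ := hlam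
  obtain ⟨b, hb⟩ := hsupp.bddAbove
  set m := b + 1 with hmdef
  have hm : ∀ r, m ≤ r → lam r = 0 := by
    intro r hr
    by_contra h
    have h1 : r ∈ Function.support lam := h
    have h2 := hb h1
    omega
  set M := lam 0 + 1 with hMdef
  have hM : ∀ r, lam r < M := fun r => lt_of_le_of_lt (hanti (Nat.zero_le r)) (Nat.lt_succ_self _)
  obtain ⟨bμ, hbμ⟩ := hμ.1.bddAbove
  set B := max bμ (i + 1) with hBdef
  have hνB : ∀ v, B < v → ν v = 0 := by
    intro v hv
    rw [hν₃ v (by omega) (by omega)]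
    by_contra h
    have h1 : v ∈ Function.support μ := h
    have h2 := hbμ h1
    omega
  -- the target set is finite
  have hentry : ∀ T, (IsSSYT lam T ∧ ∀ v, contentOf lam T v = ν v) →
      ∀ r c, c < lam r → T r c ≤ B := by
    intro T hT r c hc
    by_contra h
    push_neg at h
    have h1 : contentOf lam T (T r c) = ν (T r c) := hT.2 _
    have h0 : ν (T r c) = 0 := hνB _ h
    have hfin := KN.setQ_finite hm hM (fun q : ℕ × ℕ => T q.1 q.2 = T r c)
    have hpos : 0 < contentOf lam T (T r c) := by
      unfold contentOf
      rw [Set.ncard_pos hfin]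
      exact ⟨(r, c), ⟨hc, rfl⟩⟩
    omega
  have hD : {q : ℕ × ℕ | q.2 < lam q.1}.Finite := by
    have h := KN.setQ_finite hm hM (fun _ : ℕ × ℕ => True)
    simpa using h
  haveI : Finite ↥{q : ℕ × ℕ | q.2 < lam q.1} := hD
  set F : (ℕ → ℕ → ℕ) → (↥{q : ℕ × ℕ | q.2 < lam q.1} → Fin (B + 1)) :=
    fun T q => ⟨min (T q.1.1 q.1.2) B, Nat.lt_succ_of_le (min_le_right _ _)⟩ with hFdef
  have hinjF : Set.InjOn F {T : ℕ → ℕ → ℕ | IsSSYT lam T ∧ ∀ v, contentOf lam T v = ν v} := by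
    intro T1 h1 T2 h2 hFeq
    funext r c
    by_cases hc : c < lam r
    · have hq : ((r, c) : ℕ × ℕ) ∈ {q : ℕ × ℕ | q.2 < lam q.1} := hc
      have heq := congrArg Fin.val (congrFun hFeq ⟨(r, c), hq⟩)
      simp only [hFdef] at heq
      have b1 : T1 r c ≤ B := hentry T1 h1 r c hc
      have b2 : T2 r c ≤ B := hentry T2 h2 r c hc
      omega
    · rw [h1.1.2.2 r c (by omega), h2.1.2.2 r c (by omega)]
  have hfinSν : {T : ℕ → ℕ → ℕ | IsSSYT lam T ∧ ∀ v, contentOf lam T v = ν v}.Finite :=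
    Set.Finite.of_finite_image (Set.toFinite _) hinjF
  -- the injection
  set Φ : (ℕ → ℕ → ℕ) → (ℕ → ℕ → ℕ) := fun T =>
    if h : IsSSYT lam T ∧ ∀ v, contentOf lam T v = μ v
    then KN.flip i m M T (Classical.choose (KN.main_step hm hM hanti μ hi T h.1 h.2))
    else T with hΦdef
  unfold Kostka
  apply Set.ncard_le_ncard_of_injOn Φ ?_ ?_ hfinSν
  · -- maps source into target
    intro T hT
    obtain ⟨hT1, hT2⟩ := hT
    have hdd : Φ T = KN.flip i m M T
        (Classical.choose (KN.main_step hm hM hanti μ hi T hT1 hT2)) := by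
      simp only [hΦdef]; rw [dif_pos ⟨hT1, hT2⟩]
    have hspec := Classical.choose_spec (KN.main_step hm hM hanti μ hi T hT1 hT2)
    rw [hdd]
    refine ⟨hspec.2.2.1, ?_⟩
    intro v
    by_cases hv1 : v = i
    · subst hv1
      rw [hspec.2.2.2.1, hν₁]
    · by_cases hv2 : v = i + 1
      · subst hv2
        rw [hspec.2.2.2.2.1, hν₂]
      · rw [hspec.2.2.2.2.2.1 v hv1 hv2, hν₃ v hv1 hv2]
  · -- injectivity
    intro T1 h1 T2 h2 heq
    obtain ⟨h11, h12⟩ := h1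
    obtain ⟨h21, h22⟩ := h2
    have hd1 : Φ T1 = KN.flip i m M T1
        (Classical.choose (KN.main_step hm hM hanti μ hi T1 h11 h12)) := by
      simp only [hΦdef]; rw [dif_pos ⟨h11, h12⟩]
    have hd2 : Φ T2 = KN.flip i m M T2
        (Classical.choose (KN.main_step hm hM hanti μ hi T2 h21 h22)) := by
      simp only [hΦdef]; rw [dif_pos ⟨h21, h22⟩]
    set K1 := Classical.choose (KN.main_step hm hM hanti μ hi T1 h11 h12) with hK1def
    set K2 := Classical.choose (KN.main_step hm hM hanti μ hi T2 h21 h22) with hK2def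
    have hspec1 := Classical.choose_spec (KN.main_step hm hM hanti μ hi T1 h11 h12)
    have hspec2 := Classical.choose_spec (KN.main_step hm hM hanti μ hi T2 h21 h22)
    rw [hd1, hd2] at heq
    have hL1 := hspec1.2.2.2.2.2.2
    have hL2 := hspec2.2.2.2.2.2.2
    rw [heq] at hL1
    have hK12 : K1 = K2 := le_antisymm (hL1.2 hL2.1) (hL2.2 hL1.1)
    funext r c
    by_cases hrc : r = (KN.dec m M K1).1 ∧ c = (KN.dec m M K1).2
    · obtain ⟨rfl, rfl⟩ := hrc
      rw [hspec1.2.1]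
      rw [hK12]
      exact (hspec2.2.1).symm
    · have e1 : KN.flip i m M T1 K1 r c = T1 r c := by
        unfold KN.flip; rw [if_neg hrc]
      have e2 : KN.flip i m M T2 K2 r c = T2 r c := by
        unfold KN.flip
        rw [if_neg (by rw [← hK12]; exact hrc)]
      rw [← e1, ← e2, heq]
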